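/- Let N, R_r, S, K_c be positive integers with S < K_c and S + 1 ≤ R_r, let 𝒟 ⊆ {1,…,N} with |𝒟| > N − (R_r − S − 1) − K_c, and set D₁ = 𝒟 ∩ {S+1,…,N}, D₂ = 𝒟 ∩ {1,…,S}; assume N − |D₁| − R_r + 1 ≥ 1. Define d : {1,…,N} → ℝ by d(n) = 1/K_c for n ∈ {1,…,S}∖𝒟, d(n) = (K_c − S + |D₂|)/(K_c (N − |D₁| − R_r + 1)) for n ∈ {S+1,…,N}∖𝒟, and d(n) = 0 for n ∈ 𝒟. Then d is nonnegative, satisfies d(n) ≤ 1/K_c on {1,…,S}∖𝒟, satisfies ∑_{n ∈ ({1,…,N}∖𝒟)∖X} d(n) ≥ 1 for every X ⊆ {1,…,N}∖𝒟 with |X| = R_r − S − 1, and ∑_{n ∈ {1,…,N}∖𝒟} d(n) = (N − S − |D₁|)/(N − |D₁| − R_r + 1) − (S − |D₂|)(R_r − S − 1)/(K_c (N − |D₁| − R_r + 1)). -/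

import Mathlib

/-- In the regime `|𝒟| > N - (R_r - S - 1) - K_c`, the explicitly defined vector
(`1/K_c` on available constrained servers, `(K_c - S + |D₂|)/(K_c (N - |D₁| - R_r + 1))`
on available unconstrained servers, `0` on dropout servers) is feasible for the
download-cost linear program and attains the converse lower bound. -/
theorem stmt_9 (N R_r S K_c : ℕ) (hN : 0 < N) (hR : 0 < R_r) (hS : 0 < S) (hK : 0 < K_c)
    (hSK : S < K_c) (hSR : S + 1 ≤ R_r)
    (𝒟 : Finset ℕ) (h𝒟 : 𝒟 ⊆ Finset.Icc 1 N)
    (D₁ D₂ : Finset ℕ)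
    (hD₁ : D₁ = 𝒟 ∩ Finset.Icc (S + 1) N) (hD₂ : D₂ = 𝒟 ∩ Finset.Icc 1 S)
    (hbig : (N : ℤ) - ((R_r : ℤ) - (S : ℤ) - 1) - (K_c : ℤ) < (𝒟.card : ℤ))
    (hcard : D₁.card + R_r ≤ N)
    (d : ℕ → ℝ)
    (hd1 : ∀ n ∈ Finset.Icc 1 S \ 𝒟, d n = 1 / (K_c : ℝ))
    (hd2 : ∀ n ∈ Finset.Icc (S + 1) N \ 𝒟,
      d n = ((K_c : ℝ) - S + D₂.card) / ((K_c : ℝ) * ((N : ℝ) - D₁.card - R_r + 1)))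
    (hd3 : ∀ n ∈ 𝒟, d n = 0) :
    (∀ n ∈ Finset.Icc 1 N, 0 ≤ d n) ∧
    (∀ n ∈ Finset.Icc 1 S \ 𝒟, d n ≤ 1 / (K_c : ℝ)) ∧
    (∀ X ⊆ Finset.Icc 1 N \ 𝒟, X.card = R_r - S - 1 →
      1 ≤ ∑ n ∈ (Finset.Icc 1 N \ 𝒟) \ X, d n) ∧
    ∑ n ∈ Finset.Icc 1 N \ 𝒟, d n =
      ((N : ℝ) - S - D₁.card) / ((N : ℝ) - D₁.card - R_r + 1) -
        ((S : ℝ) - D₂.card) * ((R_r : ℝ) - S - 1) /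
          ((K_c : ℝ) * ((N : ℝ) - D₁.card - R_r + 1)) := by
  classical
  have hRN : R_r ≤ N := le_trans (Nat.le_add_left _ _) hcard
  have hSN : S < N := lt_of_lt_of_le hSR hRN
  -- cardinalities
  have hD2S : D₂ ⊆ Finset.Icc 1 S := by rw [hD₂]; exact Finset.inter_subset_right
  have hD1S : D₁ ⊆ Finset.Icc (S + 1) N := by rw [hD₁]; exact Finset.inter_subset_right
  have hc2 : D₂.card ≤ S := by
    have h := Finset.card_le_card hD2S
    simp [Nat.card_Icc] at h; omega
  have hc1 : D₁.card ≤ N - S := by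
    have h := Finset.card_le_card hD1S
    simp [Nat.card_Icc] at h; omega
  have hA1eq : Finset.Icc 1 S \ 𝒟 = Finset.Icc 1 S \ D₂ := by
    ext n; simp only [Finset.mem_sdiff, hD₂, Finset.mem_inter]; tauto
  have hA2eq : Finset.Icc (S + 1) N \ 𝒟 = Finset.Icc (S + 1) N \ D₁ := by
    ext n; simp only [Finset.mem_sdiff, hD₁, Finset.mem_inter]; tauto
  have hA1card : (Finset.Icc 1 S \ 𝒟).card = S - D₂.card := by
    rw [hA1eq, Finset.card_sdiff_of_subset hD2S, Nat.card_Icc]; omega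
  have hA2card : (Finset.Icc (S + 1) N \ 𝒟).card = N - S - D₁.card := by
    rw [hA2eq, Finset.card_sdiff_of_subset hD1S, Nat.card_Icc]; omega
  have hDcard : 𝒟.card = D₁.card + D₂.card := by
    have hdisj : Disjoint D₁ D₂ := by
      rw [Finset.disjoint_left]
      intro a h1 h2
      rw [hD₁, Finset.mem_inter, Finset.mem_Icc] at h1
      rw [hD₂, Finset.mem_inter, Finset.mem_Icc] at h2
      omega
    rw [← Finset.card_union_of_disjoint hdisj]
    congr 1
    ext n
    rw [Finset.mem_union, hD₁, hD₂, Finset.mem_inter, Finset.mem_inter,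
      Finset.mem_Icc, Finset.mem_Icc]
    constructor
    · intro h
      have hb := h𝒟 h
      rw [Finset.mem_Icc] at hb
      by_cases hns : n ≤ S
      · right; exact ⟨h, hb.1, hns⟩
      · left; exact ⟨h, by omega, hb.2⟩
    · rintro (⟨h, _⟩ | ⟨h, _⟩) <;> exact h
  have key : N + S + 2 ≤ R_r + K_c + D₁.card + D₂.card := by
    rw [hDcard] at hbig; push_cast at hbig; omega
  -- real-number basics
  set M : ℝ := (N : ℝ) - D₁.card - R_r + 1 with hMdef
  have hM1 : (1 : ℝ) ≤ M := by
    have h : (D₁.card : ℝ) + R_r ≤ N := by exact_mod_cast hcard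
    rw [hMdef]; linarith
  have hKpos : (0 : ℝ) < K_c := by exact_mod_cast hK
  have hSKr : (S : ℝ) < K_c := by exact_mod_cast hSK
  have hc2r : (0 : ℝ) ≤ (D₂.card : ℝ) := Nat.cast_nonneg _
  have hnum_pos : (0 : ℝ) < (K_c : ℝ) - S + D₂.card := by linarith
  set v : ℝ := ((K_c : ℝ) - S + D₂.card) / ((K_c : ℝ) * M) with hvdef
  have hMpos : (0 : ℝ) < M := by linarith
  have hv_pos : 0 < v := div_pos hnum_pos (by positivity)
  have hbig' : M ≤ (K_c : ℝ) - S + D₂.card := by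
    have h1 : (N : ℝ) + S + 2 ≤ (R_r : ℝ) + K_c + D₁.card + D₂.card := by
      exact_mod_cast key
    rw [hMdef]; linarith
  have hv_ge : 1 / (K_c : ℝ) ≤ v := by
    rw [hvdef, div_le_div_iff₀ hKpos (by positivity)]
    nlinarith
  -- sums over the two pieces
  have hsum1 : ∑ n ∈ Finset.Icc 1 S \ 𝒟, d n = ((S : ℝ) - D₂.card) / K_c := by
    rw [Finset.sum_congr rfl hd1, Finset.sum_const, hA1card, nsmul_eq_mul,
      Nat.cast_sub hc2]
    ring
  have hcast2 : ((N - S - D₁.card : ℕ) : ℝ) = (N : ℝ) - S - D₁.card := by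
    rw [Nat.cast_sub hc1, Nat.cast_sub hSN.le]
  have hsum2 : ∑ n ∈ Finset.Icc (S + 1) N \ 𝒟, d n = ((N : ℝ) - S - D₁.card) * v := by
    rw [Finset.sum_congr rfl hd2, Finset.sum_const, hA2card, nsmul_eq_mul, hcast2]
  have hsplitA : Finset.Icc 1 N \ 𝒟 =
      (Finset.Icc 1 S \ 𝒟) ∪ (Finset.Icc (S + 1) N \ 𝒟) := by
    have : Finset.Icc 1 N = Finset.Icc 1 S ∪ Finset.Icc (S + 1) N := by
      ext n; simp only [Finset.mem_union, Finset.mem_Icc]; omega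
    rw [this, Finset.union_sdiff_distrib]
  have hdisjA : Disjoint (Finset.Icc 1 S \ 𝒟) (Finset.Icc (S + 1) N \ 𝒟) := by
    rw [Finset.disjoint_left]
    intro a h1 h2
    rw [Finset.mem_sdiff, Finset.mem_Icc] at h1 h2
    omega
  have htot : ∑ n ∈ Finset.Icc 1 N \ 𝒟, d n =
      ((S : ℝ) - D₂.card) / K_c + ((N : ℝ) - S - D₁.card) * v := by
    rw [hsplitA, Finset.sum_union hdisjA, hsum1, hsum2]
  have hdle : ∀ n ∈ Finset.Icc 1 N \ 𝒟, d n ≤ v := by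
    intro n hn
    rw [Finset.mem_sdiff, Finset.mem_Icc] at hn
    by_cases h : n ≤ S
    · rw [hd1 n (by rw [Finset.mem_sdiff, Finset.mem_Icc]; exact ⟨⟨hn.1.1, h⟩, hn.2⟩)]
      exact hv_ge
    · rw [hd2 n (by rw [Finset.mem_sdiff, Finset.mem_Icc]; exact ⟨⟨by omega, hn.1.2⟩, hn.2⟩)]
  refine ⟨?_, ?_, ?_, ?_⟩
  · -- nonnegativity
    intro n hn
    by_cases h : n ∈ 𝒟
    · rw [hd3 n h]
    · rw [Finset.mem_Icc] at hn
      by_cases h2 : n ≤ S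
      · rw [hd1 n (by rw [Finset.mem_sdiff, Finset.mem_Icc]; exact ⟨⟨hn.1, h2⟩, h⟩)]
        positivity
      · rw [hd2 n (by rw [Finset.mem_sdiff, Finset.mem_Icc]; exact ⟨⟨by omega, hn.2⟩, h⟩)]
        exact hv_pos.le
  · -- upper bound on constrained servers
    intro n hn
    rw [hd1 n hn]
  · -- feasibility constraint
    intro X hX hXcard
    have hXsum : ∑ n ∈ X, d n ≤ ((R_r : ℝ) - S - 1) * v := by
      have h1 : ∑ n ∈ X, d n ≤ X.card • v :=
        Finset.sum_le_card_nsmul X d v fun n hn => hdle n (hX hn)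
      have h2 : ((X.card : ℕ) : ℝ) = (R_r : ℝ) - S - 1 := by
        rw [hXcard, Nat.cast_sub (by omega : 1 ≤ R_r - S), Nat.cast_sub (by omega : S ≤ R_r)]
        norm_num
      rw [nsmul_eq_mul, h2] at h1
      exact h1
    rw [Finset.sum_sdiff_eq_sub hX, htot]
    have hone : ((S : ℝ) - D₂.card) / K_c + ((N : ℝ) - S - D₁.card) * v -
        ((R_r : ℝ) - S - 1) * v = 1 := by
      rw [hvdef, hMdef]
      have hM0 : (N : ℝ) - D₁.card - R_r + 1 ≠ 0 := (by linarith : (0:ℝ) < (N : ℝ) - D₁.card - R_r + 1).ne'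
      field_simp
      ring
    linarith
  · -- total download cost
    rw [htot, hvdef, hMdef]
    have hM0 : (N : ℝ) - D₁.card - R_r + 1 ≠ 0 := (by linarith : (0:ℝ) < (N : ℝ) - D₁.card - R_r + 1).ne'
    field_simp
    ring
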